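/- arXiv:2209.11425 — 2 statements merged into one kernel-verified Lean document; each statement's English description precedes it below -/
import Mathlib

section
/- For vectors w, h in ℂ^n and a Hermitian positive definite matrix R, the generalized Rayleigh quotient (wᴴ h hᴴ w)/(wᴴ R w) over nonzero w is maximized at w* = R⁻¹h (up to scaling), with maximum value hᴴ R⁻¹ h. -/
open Matrix ComplexOrder

/-- The generalized Rayleigh quotient `(wᴴ h hᴴ w)/(wᴴ R w)` over nonzero `w` is
maximized at `w* = R⁻¹ h`, with maximum value `hᴴ R⁻¹ h`. -/
theorem stmt_4 (n : ℕ) (h : Fin n → ℂ) (hh : h ≠ 0)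
    (R : Matrix (Fin n) (Fin n) ℂ) (hR : R.PosDef) :
    (∀ w : Fin n → ℂ, w ≠ 0 →
      ((star w ⬝ᵥ h) * (star h ⬝ᵥ w)).re / (star w ⬝ᵥ R.mulVec w).re ≤
        (star h ⬝ᵥ R⁻¹.mulVec h).re) ∧
    ((star (R⁻¹.mulVec h) ⬝ᵥ h) * (star h ⬝ᵥ R⁻¹.mulVec h)).re /
        (star (R⁻¹.mulVec h) ⬝ᵥ R.mulVec (R⁻¹.mulVec h)).re =
      (star h ⬝ᵥ R⁻¹.mulVec h).re := by
  set u : Fin n → ℂ := R⁻¹.mulVec h with hu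
  have hRu : R.mulVec u = h := by
    rw [hu, mulVec_mulVec, Matrix.mul_nonsing_inv _ (isUnit_iff_isUnit_det _ |>.1 hR.isUnit),
      one_mulVec]
  have hu0 : u ≠ 0 := by
    intro h0
    apply hh
    rw [← hRu, h0, mulVec_zero]
  letI core : PreInnerProductSpace.Core ℂ (Fin n → ℂ) :=
    { inner := fun x y => star x ⬝ᵥ R.mulVec y
      conj_inner_symm := fun x y => by
        rw [starRingEnd_apply, ← star_dotProduct, star_mulVec, hR.isHermitian.eq,
          ← dotProduct_mulVec]
      re_inner_nonneg := fun x => by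
        by_cases hx : x = 0
        · simp [hx]
        · exact le_of_lt (hR.re_dotProduct_pos hx)
      add_left := by simp only [star_add, add_dotProduct, forall_const, implies_true]
      smul_left := fun x y r => by
        rw [← smul_eq_mul, ← smul_dotProduct, starRingEnd_apply, ← star_smul] }
  have hconj : ∀ x y : Fin n → ℂ, star x ⬝ᵥ y = starRingEnd ℂ (star y ⬝ᵥ x) := by
    intro x y
    rw [starRingEnd_apply, star_dotProduct]
  have hcc : star h ⬝ᵥ u = starRingEnd ℂ (star u ⬝ᵥ h) := hconj h u
  have huu : star u ⬝ᵥ R.mulVec u = star u ⬝ᵥ h := by rw [hRu]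
  have hcre : (star h ⬝ᵥ u).re = (star u ⬝ᵥ h).re := by rw [hcc]; simp
  have hcpos : 0 < (star u ⬝ᵥ h).re := by
    have := hR.re_dotProduct_pos hu0
    rwa [huu] at this
  have hself : ((star u ⬝ᵥ h).re : ℂ) = star u ⬝ᵥ h := by
    have h0 := InnerProductSpace.Core.inner_self_ofReal_re (𝕜 := ℂ) (c := core) u
    have h1 : ((star u ⬝ᵥ R.mulVec u).re : ℂ) = star u ⬝ᵥ R.mulVec u := h0
    rwa [huu] at h1
  constructor
  · intro w hw
    have hdpos : 0 < (star w ⬝ᵥ R.mulVec w).re := hR.re_dotProduct_pos hw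
    rw [div_le_iff₀ hdpos, hcre]
    have hcs0 := InnerProductSpace.Core.inner_mul_inner_self_le (𝕜 := ℂ) (c := core) w u
    have hcs : ‖star w ⬝ᵥ R.mulVec u‖ * ‖star u ⬝ᵥ R.mulVec w‖ ≤
        (star w ⬝ᵥ R.mulVec w).re * (star u ⬝ᵥ R.mulVec u).re := hcs0
    rw [hRu] at hcs
    have h1 : star u ⬝ᵥ R.mulVec w = starRingEnd ℂ (star w ⬝ᵥ h) := by
      rw [hconj u (R.mulVec w)]
      congr 1
      rw [star_mulVec, hR.isHermitian.eq, ← dotProduct_mulVec, hRu]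
    rw [h1] at hcs
    have h2 : star h ⬝ᵥ w = starRingEnd ℂ (star w ⬝ᵥ h) := hconj h w
    rw [h2, Complex.mul_conj]
    have h3 : (Complex.normSq (star w ⬝ᵥ h) : ℂ).re = Complex.normSq (star w ⬝ᵥ h) := by simp
    rw [h3]
    have h4 : ‖(star w ⬝ᵥ h : ℂ)‖ * ‖starRingEnd ℂ (star w ⬝ᵥ h)‖
        = Complex.normSq (star w ⬝ᵥ h) := by
      rw [RCLike.norm_conj, ← Complex.sq_norm, sq]
    rw [h4] at hcs
    calc Complex.normSq (star w ⬝ᵥ h)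
        ≤ (star w ⬝ᵥ R.mulVec w).re * (star u ⬝ᵥ h).re := hcs
      _ = (star u ⬝ᵥ h).re * (star w ⬝ᵥ R.mulVec w).re := mul_comm _ _
  · rw [huu, hcc, Complex.mul_conj', Complex.conj_re]
    have hn : ‖(star u ⬝ᵥ h : ℂ)‖ = (star u ⬝ᵥ h).re := by
      conv_lhs => rw [← hself]
      rw [Complex.norm_real, Real.norm_eq_abs, abs_of_pos hcpos]
    rw [hn, ← Complex.ofReal_pow, Complex.ofReal_re, sq, mul_div_assoc,
      div_self hcpos.ne', mul_one]
end

section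
/- For N_T ≥ 1 and distortion levels 0 ≤ β < 1, the asymptotic MSE floor F(β_T, β_R) = 1 − N_T/(β_T² + (1+β_R²)N_T) satisfies F(0, β) ≥ F(β, 0) for every β ≥ 0, i.e., receiver distortion of a given level degrades MSE at least as much as the same level of transmitter distortion. -/
/-- Receiver distortion degrades the high-SNR MSE floor at least as much as the same
level of transmitter distortion: `F(0,β) ≥ F(β,0)` where
`F(β_T,β_R) = 1 − N_T/(β_T² + (1+β_R²)N_T)`. -/
theorem stmt_10 (N : ℕ) (hN : 1 ≤ N) (β : ℝ) (hβ0 : 0 ≤ β) (hβ1 : β < 1) :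
    1 - (N : ℝ) / ((0 : ℝ) ^ 2 + (1 + β ^ 2) * N) ≥
      1 - (N : ℝ) / (β ^ 2 + (1 + (0 : ℝ) ^ 2) * N) := by
  have hN1 : (1 : ℝ) ≤ N := by exact_mod_cast hN
  have h1 : (0:ℝ) < β ^ 2 + (1 + (0:ℝ) ^ 2) * N := by nlinarith [sq_nonneg β]
  have h2 : β ^ 2 + (1 + (0:ℝ) ^ 2) * N ≤ (0:ℝ) ^ 2 + (1 + β ^ 2) * N := by
    nlinarith [sq_nonneg β]
  have := div_le_div_of_nonneg_left (by positivity : (0:ℝ) ≤ (N:ℝ)) h1 h2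
  linarith
end
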